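/- Suppose (A_1, d_1), …, (A_n, d_n) and (A'_1, d'_1), …, (A'_m, d'_m) are finite abelian groups with complex-valued weights whose Fourier transforms are nonzero at every nontrivial character, and suppose all A_i and A'_j are nontrivial. Let (A, d) and (A', d') be the direct sums (with d(a_1,…,a_n) = ∑ d_i(a_i)). If there is a group isomorphism φ: A → A' and an element a' ∈ A' with d'(φ(a) + a') = d(a) for all a ∈ A, then n = m and φ preserves the direct sum decompositions: for each i there is some j with φ(A_i) = A'_j (viewing A_i as the i-th coordinate subgroup). -/

import Mathlib

/-- The Fourier transform of `d : A → ℂ`, with the normalization `1/|A|`. -/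
noncomputable def fourierTransform {A : Type*} [AddCommGroup A] [Fintype A]
    (d : A → ℂ) (φ : AddChar A ℂ) : ℂ :=
  (Fintype.card A : ℂ)⁻¹ * ∑ a : A, d a * (starRingEnd ℂ) (φ a)

open Finset

namespace AffIsoAux
set_option linter.unusedSectionVars false

lemma addChar_map_sum {A M : Type*} [AddCommMonoid A] [CommMonoid M]
    (χ : AddChar A M) {κ : Type*} (s : Finset κ) (f : κ → A) :
    χ (∑ k ∈ s, f k) = ∏ k ∈ s, χ (f k) := by
  classical
  induction s using Finset.induction with
  | empty => simp
  | insert _ _ h ih =>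
      rw [Finset.sum_insert h, Finset.prod_insert h, AddChar.map_add_eq_mul, ih]

variable {ι : Type*} [Fintype ι] [DecidableEq ι] {B : ι → Type*}
  [∀ i, AddCommGroup (B i)] [∀ i, Fintype (B i)]

/-- the `i`-th component of a character of a product -/
def cmp (χ : AddChar (∀ i, B i) ℂ) (i : ι) : AddChar (B i) ℂ :=
  χ.compAddMonoidHom (AddMonoidHom.single B i)

lemma cmp_apply (χ : AddChar (∀ i, B i) ℂ) (i : ι) (x : B i) :
    cmp χ i x = χ (Pi.single i x) := rfl

lemma map_eq_prod_cmp (χ : AddChar (∀ i, B i) ℂ) (a : ∀ i, B i) :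
    χ a = ∏ i, cmp χ i (a i) := by
  conv_lhs => rw [← Finset.univ_sum_single a]
  rw [addChar_map_sum]
  rfl

lemma eq_one_of_cmp (χ : AddChar (∀ i, B i) ℂ) (h : ∀ i, cmp χ i = 1) : χ = 1 := by
  ext a
  rw [map_eq_prod_cmp, AddChar.one_apply]
  refine Finset.prod_eq_one fun i _ => by rw [h i, AddChar.one_apply]

@[simp] lemma cmp_one (i : ι) : cmp (1 : AddChar (∀ i, B i) ℂ) i = 1 := by
  ext x; simp [cmp_apply]

lemma cmp_mul (χ ψ : AddChar (∀ i, B i) ℂ) (i : ι) :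
    cmp (χ * ψ) i = cmp χ i * cmp ψ i := by
  ext x; simp [cmp_apply]

lemma cmp_inv (χ : AddChar (∀ i, B i) ℂ) (i : ι) :
    cmp χ⁻¹ i = (cmp χ i)⁻¹ := by
  ext x
  rw [cmp_apply, AddChar.inv_apply, AddChar.inv_apply, cmp_apply, ← Pi.single_neg]

/-- the conjugate character -/
def conjChar {A : Type*} [AddCommGroup A] (ψ : AddChar A ℂ) : AddChar A ℂ :=
  (starRingEnd ℂ).toMonoidHom.compAddChar ψ

lemma conjChar_apply {A : Type*} [AddCommGroup A] (ψ : AddChar A ℂ) (a : A) :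
    conjChar ψ a = (starRingEnd ℂ) (ψ a) := rfl

lemma conjChar_eq_one_iff {A : Type*} [AddCommGroup A] {ψ : AddChar A ℂ} :
    conjChar ψ = 1 ↔ ψ = 1 := by
  constructor
  · intro h
    ext a
    have h1 := DFunLike.congr_fun h a
    rw [conjChar_apply, AddChar.one_apply] at h1
    rw [AddChar.one_apply]
    have := congrArg (starRingEnd ℂ) h1
    simpa using this
  · rintro rfl
    ext a; simp [conjChar_apply]

lemma sum_conjChar_eq_zero {A : Type*} [AddCommGroup A] [Fintype A]
    {ψ : AddChar A ℂ} (h : ψ ≠ 1) : ∑ x, conjChar ψ x = 0 :=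
  AddChar.sum_eq_zero_iff_ne_zero.mpr (fun hc => h (conjChar_eq_one_iff.mp hc))

lemma sum_conjChar_eq_card {A : Type*} [AddCommGroup A] [Fintype A]
    {ψ : AddChar A ℂ} (h : ψ = 1) : ∑ x, conjChar ψ x = (Fintype.card A : ℂ) := by
  subst h
  simp [conjChar_apply, AddChar.one_apply]

end AffIsoAux

namespace AffIsoAux

variable {ι : Type*} [Fintype ι] [DecidableEq ι] {B : ι → Type*}
  [∀ i, AddCommGroup (B i)] [∀ i, Fintype (B i)]

lemma sum_term (d : ∀ i, B i → ℂ) (χ : AddChar (∀ i, B i) ℂ) (i : ι) :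
    ∑ a : ∀ k, B k, d i (a i) * conjChar χ a
      = (∑ x : B i, d i x * conjChar (cmp χ i) x)
        * ∏ k ∈ Finset.univ.erase i, ∑ x : B k, conjChar (cmp χ k) x := by
  classical
  have hconj : ∀ a : ∀ k, B k, conjChar χ a = ∏ k, conjChar (cmp χ k) (a k) := by
    intro a
    rw [conjChar_apply, map_eq_prod_cmp, map_prod]
    rfl
  set G : ∀ k, B k → ℂ :=
    Function.update (fun k (x : B k) => conjChar (cmp χ k) x)
      i (fun x => d i x * conjChar (cmp χ i) x) with hG
  have key : ∀ a : ∀ k, B k, d i (a i) * conjChar χ a = ∏ k, G k (a k) := by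
    intro a
    rw [hconj a, ← Finset.mul_prod_erase Finset.univ _ (Finset.mem_univ i),
      ← Finset.mul_prod_erase Finset.univ (fun k => G k (a k)) (Finset.mem_univ i),
      ← mul_assoc]
    congr 1
    · simp [hG]
    · refine Finset.prod_congr rfl fun k hk => ?_
      have : k ≠ i := (Finset.mem_erase.mp hk).1
      simp [hG, Function.update_of_ne this]
  calc ∑ a : ∀ k, B k, d i (a i) * conjChar χ a
      = ∑ a : ∀ k, B k, ∏ k, G k (a k) := Finset.sum_congr rfl fun a _ => key a
    _ = ∏ k, ∑ x : B k, G k x := by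
        rw [← Fintype.piFinset_univ, ← Finset.prod_univ_sum]
    _ = (∑ x : B i, d i x * conjChar (cmp χ i) x)
        * ∏ k ∈ Finset.univ.erase i, ∑ x : B k, conjChar (cmp χ k) x := by
        rw [← Finset.mul_prod_erase Finset.univ _ (Finset.mem_univ i)]
        congr 1
        · simp [hG]
        · refine Finset.prod_congr rfl fun k hk => ?_
          have : k ≠ i := (Finset.mem_erase.mp hk).1
          simp [hG, Function.update_of_ne this]

lemma FT_eq (d : ∀ i, B i → ℂ) (χ : AddChar (∀ i, B i) ℂ) :
    fourierTransform (fun a => ∑ i, d i (a i)) χ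
      = (Fintype.card (∀ i, B i) : ℂ)⁻¹ *
        ∑ i, ((∑ x : B i, d i x * conjChar (cmp χ i) x)
          * ∏ k ∈ Finset.univ.erase i, ∑ x : B k, conjChar (cmp χ k) x) := by
  unfold fourierTransform
  congr 1
  calc ∑ a : ∀ k, B k, (∑ i, d i (a i)) * (starRingEnd ℂ) (χ a)
      = ∑ a : ∀ k, B k, ∑ i, d i (a i) * conjChar χ a := by
        refine Finset.sum_congr rfl fun a _ => ?_
        rw [Finset.sum_mul]; rfl
    _ = ∑ i, ∑ a : ∀ k, B k, d i (a i) * conjChar χ a := Finset.sum_comm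
    _ = _ := Finset.sum_congr rfl fun i _ => sum_term d χ i

/-- `χ` has unique support at `i` -/
def US (χ : AddChar (∀ i, B i) ℂ) (i : ι) : Prop :=
  cmp χ i ≠ 1 ∧ ∀ k, k ≠ i → cmp χ k = 1

lemma US.ne_one {χ : AddChar (∀ i, B i) ℂ} {i : ι} (h : US χ i) : χ ≠ 1 :=
  fun hc => h.1 (by rw [hc, cmp_one])

lemma US_unique {χ : AddChar (∀ i, B i) ℂ} {i₁ i₂ : ι}
    (h1 : US χ i₁) (h2 : US χ i₂) : i₁ = i₂ := by
  by_contra hne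
  exact h1.1 (h2.2 i₁ hne)

lemma FT_of_US (d : ∀ i, B i → ℂ) {χ : AddChar (∀ i, B i) ℂ} {i₀ : ι} (h : US χ i₀) :
    fourierTransform (fun a => ∑ i, d i (a i)) χ = fourierTransform (d i₀) (cmp χ i₀) := by
  classical
  rw [FT_eq]
  rw [Finset.sum_eq_single i₀]
  · have herase : ∀ k ∈ Finset.univ.erase i₀, (∑ x : B k, conjChar (cmp χ k) x)
        = (Fintype.card (B k) : ℂ) := fun k hk =>
      sum_conjChar_eq_card (h.2 k (Finset.mem_erase.mp hk).1)
    rw [Finset.prod_congr rfl herase]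
    unfold fourierTransform
    have hcards : (Fintype.card (∀ i, B i) : ℂ)
        = (Fintype.card (B i₀) : ℂ) * ∏ k ∈ Finset.univ.erase i₀, (Fintype.card (B k) : ℂ) := by
      rw [Fintype.card_pi, ← Finset.mul_prod_erase Finset.univ _ (Finset.mem_univ i₀)]
      push_cast
      rfl
    have h1 : (Fintype.card (B i₀) : ℂ) ≠ 0 := Nat.cast_ne_zero.mpr Fintype.card_ne_zero
    have h2 : (∏ k ∈ Finset.univ.erase i₀, (Fintype.card (B k) : ℂ)) ≠ 0 :=
      Finset.prod_ne_zero_iff.mpr fun k _ => Nat.cast_ne_zero.mpr Fintype.card_ne_zero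
    rw [hcards, mul_inv]
    simp only [conjChar_apply]
    field_simp
  · intro i _ hi
    have : i₀ ∈ Finset.univ.erase i := Finset.mem_erase.mpr ⟨fun hc => hi hc.symm, Finset.mem_univ _⟩
    rw [Finset.prod_eq_zero this (sum_conjChar_eq_zero h.1), mul_zero]
  · intro hc; exact absurd (Finset.mem_univ i₀) hc

lemma FT_eq_zero (d : ∀ i, B i → ℂ) {χ : AddChar (∀ i, B i) ℂ} {i₁ i₂ : ι}
    (hne : i₁ ≠ i₂) (h1 : cmp χ i₁ ≠ 1) (h2 : cmp χ i₂ ≠ 1) :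
    fourierTransform (fun a => ∑ i, d i (a i)) χ = 0 := by
  classical
  rw [FT_eq]
  rw [Finset.sum_eq_zero, mul_zero]
  intro i _
  rcases ne_or_eq i i₁ with hi | rfl
  · have : i₁ ∈ Finset.univ.erase i := Finset.mem_erase.mpr ⟨fun hc => hi hc.symm, Finset.mem_univ _⟩
    rw [Finset.prod_eq_zero this (sum_conjChar_eq_zero h1), mul_zero]
  · have : i₂ ∈ Finset.univ.erase i := Finset.mem_erase.mpr ⟨fun hc => hne hc.symm, Finset.mem_univ _⟩
    rw [Finset.prod_eq_zero this (sum_conjChar_eq_zero h2), mul_zero]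

lemma exists_US_iff (d : ∀ i, B i → ℂ)
    (hd : ∀ i, ∀ ψ : AddChar (B i) ℂ, ψ ≠ 1 → fourierTransform (d i) ψ ≠ 0)
    {χ : AddChar (∀ i, B i) ℂ} (hχ : χ ≠ 1) :
    (∃ i, US χ i) ↔ fourierTransform (fun a => ∑ i, d i (a i)) χ ≠ 0 := by
  constructor
  · rintro ⟨i, h⟩
    rw [FT_of_US d h]
    exact hd i _ h.1
  · intro hft
    by_contra hno
    push_neg at hno
    obtain ⟨i₁, h1⟩ : ∃ i, cmp χ i ≠ 1 := by
      by_contra hall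
      push_neg at hall
      exact hχ (eq_one_of_cmp χ hall)
    obtain ⟨i₂, hi₂, h2⟩ : ∃ k, k ≠ i₁ ∧ cmp χ k ≠ 1 := by
      have := hno i₁
      unfold US at this
      push_neg at this
      exact this h1
    exact hft (FT_eq_zero d (Ne.symm hi₂) h1 h2)

lemma exists_US_char (i : ι) [Nontrivial (B i)] :
    ∃ χ : AddChar (∀ k, B k) ℂ, US χ i := by
  obtain ⟨x, hx⟩ := exists_ne (0 : B i)
  obtain ⟨ψ, hψ⟩ := AddChar.exists_apply_ne_zero.mpr hx
  refine ⟨ψ.compAddMonoidHom (Pi.evalAddMonoidHom B i), ?_, ?_⟩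
  · intro hc
    apply hψ
    have := DFunLike.congr_fun hc x
    simpa [cmp_apply] using this
  · intro k hk
    ext y
    have : (Pi.single k y : ∀ j, B j) i = 0 := Pi.single_eq_of_ne (Ne.symm hk) _
    simp [cmp_apply, this]

end AffIsoAux

namespace AffIsoAux
set_option linter.unusedSectionVars false

variable {ι ι' : Type*} [Fintype ι] [DecidableEq ι] [Fintype ι'] [DecidableEq ι']
  {B : ι → Type*} [∀ i, AddCommGroup (B i)] [∀ i, Fintype (B i)]
  {B' : ι' → Type*} [∀ j, AddCommGroup (B' j)] [∀ j, Fintype (B' j)]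

/-- pull back a character along the isomorphism -/
def pull (φ : (∀ i, B i) ≃+ (∀ j, B' j)) (χ' : AddChar (∀ j, B' j) ℂ) :
    AddChar (∀ i, B i) ℂ :=
  χ'.compAddMonoidHom φ.toAddMonoidHom

lemma pull_apply (φ : (∀ i, B i) ≃+ (∀ j, B' j)) (χ' : AddChar (∀ j, B' j) ℂ)
    (a : ∀ i, B i) : pull φ χ' a = χ' (φ a) := rfl

lemma pull_symm_pull (φ : (∀ i, B i) ≃+ (∀ j, B' j)) (χ' : AddChar (∀ j, B' j) ℂ) :
    pull φ.symm (pull φ χ') = χ' := by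
  ext x; simp [pull_apply]

lemma pull_mul (φ : (∀ i, B i) ≃+ (∀ j, B' j)) (χ' ψ' : AddChar (∀ j, B' j) ℂ) :
    pull φ (χ' * ψ') = pull φ χ' * pull φ ψ' := by
  ext x; simp [pull_apply]

lemma pull_inv (φ : (∀ i, B i) ≃+ (∀ j, B' j)) (χ' : AddChar (∀ j, B' j) ℂ) :
    pull φ χ'⁻¹ = (pull φ χ')⁻¹ := by
  ext x; simp [pull_apply, AddChar.inv_apply]

lemma pull_ne_one (φ : (∀ i, B i) ≃+ (∀ j, B' j)) {χ' : AddChar (∀ j, B' j) ℂ}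
    (h : χ' ≠ 1) : pull φ χ' ≠ 1 := by
  intro hc
  apply h
  ext x
  have := DFunLike.congr_fun hc (φ.symm x)
  simpa [pull_apply] using this

lemma FT_pull (d : ∀ i, B i → ℂ) (d' : ∀ j, B' j → ℂ)
    (φ : (∀ i, B i) ≃+ (∀ j, B' j)) (a' : ∀ j, B' j)
    (hφ : ∀ a : ∀ i, B i, (∑ j, d' j (φ a j + a' j)) = ∑ i, d i (a i))
    (χ' : AddChar (∀ j, B' j) ℂ) :
    fourierTransform (fun a => ∑ i, d i (a i)) (pull φ χ')
      = (starRingEnd ℂ) (χ' (-a')) * fourierTransform (fun x => ∑ j, d' j (x j)) χ' := by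
  unfold fourierTransform
  have hcard : (Fintype.card (∀ i, B i) : ℂ) = (Fintype.card (∀ j, B' j) : ℂ) := by
    rw [Fintype.card_congr φ.toEquiv]
  rw [hcard]
  rw [mul_comm ((starRingEnd ℂ) (χ' (-a'))) _, mul_assoc]
  congr 1
  calc ∑ a : ∀ i, B i, (∑ i, d i (a i)) * (starRingEnd ℂ) ((pull φ χ') a)
      = ∑ a : ∀ i, B i, (∑ j, d' j (φ a j + a' j)) * (starRingEnd ℂ) (χ' (φ a)) := by
        refine Finset.sum_congr rfl fun a _ => by rw [hφ a, pull_apply]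
    _ = ∑ x : ∀ j, B' j, (∑ j, d' j (x j + a' j)) * (starRingEnd ℂ) (χ' x) :=
        φ.toEquiv.sum_comp fun x => (∑ j, d' j (x j + a' j)) * (starRingEnd ℂ) (χ' x)
    _ = ∑ y : ∀ j, B' j, (∑ j, d' j (y j)) * (starRingEnd ℂ) (χ' (y - a')) := by
        rw [← (Equiv.subRight a').sum_comp
          (fun x => (∑ j, d' j (x j + a' j)) * (starRingEnd ℂ) (χ' x))]
        refine Finset.sum_congr rfl fun y _ => ?_
        simp [Equiv.subRight, sub_add_cancel]
    _ = (∑ y : ∀ j, B' j, (∑ j, d' j (y j)) * (starRingEnd ℂ) (χ' y)) * (starRingEnd ℂ) (χ' (-a')) := by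
        rw [Finset.sum_mul]
        refine Finset.sum_congr rfl fun y _ => ?_
        have : χ' (y - a') = χ' y * χ' (-a') := by
          rw [sub_eq_add_neg, AddChar.map_add_eq_mul]
        rw [this, map_mul]
        ring
    _ = _ := by rw [mul_comm]

lemma exists_US_pull_iff (d : ∀ i, B i → ℂ) (d' : ∀ j, B' j → ℂ)
    (hd : ∀ i, ∀ ψ : AddChar (B i) ℂ, ψ ≠ 1 → fourierTransform (d i) ψ ≠ 0)
    (hd' : ∀ j, ∀ ψ : AddChar (B' j) ℂ, ψ ≠ 1 → fourierTransform (d' j) ψ ≠ 0)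
    (φ : (∀ i, B i) ≃+ (∀ j, B' j)) (a' : ∀ j, B' j)
    (hφ : ∀ a : ∀ i, B i, (∑ j, d' j (φ a j + a' j)) = ∑ i, d i (a i))
    {χ' : AddChar (∀ j, B' j) ℂ} (hχ' : χ' ≠ 1) :
    (∃ j, US χ' j) ↔ ∃ i, US (pull φ χ') i := by
  rw [exists_US_iff d' hd' hχ', exists_US_iff d hd (pull_ne_one φ hχ'),
    FT_pull d d' φ a' hφ χ']
  have hu : (starRingEnd ℂ) (χ' (-a')) ≠ 0 := by
    simp only [map_ne_zero]
    exact (AddChar.val_isUnit χ' (-a')).ne_zero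
  constructor
  · intro h; exact mul_ne_zero hu h
  · intro h hc; exact h (by rw [hc, mul_zero])

/-- well-definedness of the support correspondence -/
lemma support_wd (d : ∀ i, B i → ℂ) (d' : ∀ j, B' j → ℂ)
    (hd : ∀ i, ∀ ψ : AddChar (B i) ℂ, ψ ≠ 1 → fourierTransform (d i) ψ ≠ 0)
    (hd' : ∀ j, ∀ ψ : AddChar (B' j) ℂ, ψ ≠ 1 → fourierTransform (d' j) ψ ≠ 0)
    (φ : (∀ i, B i) ≃+ (∀ j, B' j)) (a' : ∀ j, B' j)
    (hφ : ∀ a : ∀ i, B i, (∑ j, d' j (φ a j + a' j)) = ∑ i, d i (a i))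
    {χ'₁ χ'₂ : AddChar (∀ j, B' j) ℂ} {j : ι'} {i₁ i₂ : ι}
    (h1 : US χ'₁ j) (h2 : US χ'₂ j)
    (g1 : US (pull φ χ'₁) i₁) (g2 : US (pull φ χ'₂) i₂) : i₁ = i₂ := by
  by_contra hne
  set χ' : AddChar (∀ j, B' j) ℂ := χ'₁ * χ'₂⁻¹ with hχ'
  have hpull : pull φ χ' = pull φ χ'₁ * (pull φ χ'₂)⁻¹ := by
    rw [hχ', pull_mul, pull_inv]
  have hp1 : cmp (pull φ χ') i₁ ≠ 1 := by
    rw [hpull, cmp_mul, cmp_inv, g2.2 i₁ hne]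
    simpa using g1.1
  have hp2 : cmp (pull φ χ') i₂ ≠ 1 := by
    rw [hpull, cmp_mul, cmp_inv, g1.2 i₂ (Ne.symm hne)]
    simpa using fun hc => g2.1 (inv_eq_one.mp hc)
  have hχ'ne : χ' ≠ 1 := by
    intro hc
    rw [hc] at hp1
    rw [pull] at hp1
    apply hp1
    ext x
    simp [cmp_apply]
  have hUSχ' : US χ' j := by
    refine ⟨?_, fun k hk => ?_⟩
    · intro hc
      apply hχ'ne
      apply eq_one_of_cmp
      intro k
      rcases eq_or_ne k j with rfl | hk
      · exact hc
      · rw [hχ', cmp_mul, cmp_inv, h1.2 k hk, h2.2 k hk]; simp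
    · rw [hχ', cmp_mul, cmp_inv, h1.2 k hk, h2.2 k hk]; simp
  obtain ⟨l, hl⟩ := (exists_US_pull_iff d d' hd hd' φ a' hφ hχ'ne).mp ⟨j, hUSχ'⟩
  rcases ne_or_eq i₁ l with h | rfl
  · exact hp1 (hl.2 i₁ h)
  · exact hp2 (hl.2 i₂ (Ne.symm hne))

end AffIsoAux

namespace AffIsoAux
set_option linter.unusedSectionVars false

variable {ι : Type*} [Fintype ι] [DecidableEq ι] {B : ι → Type*}
  [∀ i, AddCommGroup (B i)] [∀ i, Fintype (B i)]

lemma cmp_eval_self (i : ι) (ψ : AddChar (B i) ℂ) :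
    cmp (ψ.compAddMonoidHom (Pi.evalAddMonoidHom B i)) i = ψ := by
  ext x; simp [cmp_apply]

lemma cmp_eval_ne {i k : ι} (hk : k ≠ i) (ψ : AddChar (B i) ℂ) :
    cmp (ψ.compAddMonoidHom (Pi.evalAddMonoidHom B i)) k = 1 := by
  ext y
  have h0 : (Pi.single k y : ∀ j, B j) i = 0 := Pi.single_eq_of_ne (Ne.symm hk) _
  simp [cmp_apply, h0]

lemma US_eval (i : ι) {ψ : AddChar (B i) ℂ} (hψ : ψ ≠ 1) :
    US (ψ.compAddMonoidHom (Pi.evalAddMonoidHom B i)) i :=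
  ⟨by rw [cmp_eval_self]; exact hψ, fun k hk => cmp_eval_ne hk ψ⟩

lemma mem_single_range_iff (i : ι) (y : ∀ k, B k) :
    y ∈ (AddMonoidHom.single B i).range ↔ ∀ k, k ≠ i → y k = 0 := by
  constructor
  · rintro ⟨z, rfl⟩ k hk
    exact Pi.single_eq_of_ne hk z
  · intro h
    refine ⟨y i, funext fun k => ?_⟩
    rcases eq_or_ne k i with rfl | hk
    · simp
    · rw [h k hk]
      exact Pi.single_eq_of_ne hk _

end AffIsoAux

open AffIsoAux in
/-- If `(A_i, d_i)` and `(A'_j, d'_j)` are nontrivial finite abelian weighted groups whose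
Fourier transforms are nonzero at every nontrivial character, then any affine isomorphism
between the direct sums `(A, d)` and `(A', d')` forces `n = m` and sends each coordinate
subgroup `A_i` onto some coordinate subgroup `A'_j`. -/
theorem affineIso_directSum_preserves_decomposition
    {n m : ℕ} (A : Fin n → Type*) (A' : Fin m → Type*)
    [∀ i, AddCommGroup (A i)] [∀ i, Fintype (A i)] [∀ i, Nontrivial (A i)]
    [∀ j, AddCommGroup (A' j)] [∀ j, Fintype (A' j)] [∀ j, Nontrivial (A' j)]
    (d : ∀ i, A i → ℂ) (d' : ∀ j, A' j → ℂ)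
    (hd : ∀ i, ∀ χ : AddChar (A i) ℂ, χ ≠ 1 → fourierTransform (d i) χ ≠ 0)
    (hd' : ∀ j, ∀ χ : AddChar (A' j) ℂ, χ ≠ 1 → fourierTransform (d' j) χ ≠ 0)
    (φ : (∀ i, A i) ≃+ (∀ j, A' j)) (a' : ∀ j, A' j)
    (hφ : ∀ a : ∀ i, A i, (∑ j, d' j (φ a j + a' j)) = ∑ i, d i (a i)) :
    n = m ∧ ∀ i : Fin n, ∃ j : Fin m,
      AddSubgroup.map φ.toAddMonoidHom (AddMonoidHom.single A i).range =
        (AddMonoidHom.single A' j).range := by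
  classical
  -- reversed affine relation
  set b : ∀ i, A i := φ.symm (-a') with hb
  have hφ' : ∀ x' : ∀ j, A' j, (∑ i, d i (φ.symm x' i + b i)) = ∑ j, d' j (x' j) := by
    intro x'
    have h := hφ (φ.symm (x' - a'))
    rw [φ.apply_symm_apply] at h
    have e3 : φ.symm (x' - a') = φ.symm x' + b := by
      rw [hb, sub_eq_add_neg, map_add]
    rw [e3] at h
    calc ∑ i, d i (φ.symm x' i + b i) = ∑ i, d i ((φ.symm x' + b) i) := rfl
      _ = ∑ j, d' j (x' j) := by
          rw [← h]
          exact Finset.sum_congr rfl fun j _ => by simp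
  -- choice of characters with unique support
  have hex' : ∀ j : Fin m, ∃ χ' : AddChar (∀ k, A' k) ℂ, US χ' j := fun j => exists_US_char j
  set X' : ∀ j : Fin m, AddChar (∀ k, A' k) ℂ := fun j => (hex' j).choose with hX'def
  have hX' : ∀ j, US (X' j) j := fun j => (hex' j).choose_spec
  have hex : ∀ i : Fin n, ∃ χ : AddChar (∀ k, A k) ℂ, US χ i := fun i => exists_US_char i
  set X : ∀ i : Fin n, AddChar (∀ k, A k) ℂ := fun i => (hex i).choose with hXdef
  have hX : ∀ i, US (X i) i := fun i => (hex i).choose_spec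
  -- support index maps
  have hexσ : ∀ j, ∃ i, US (pull φ (X' j)) i := fun j =>
    (exists_US_pull_iff d d' hd hd' φ a' hφ (hX' j).ne_one).mp ⟨j, hX' j⟩
  set σ : Fin m → Fin n := fun j => (hexσ j).choose with hσdef
  have hσ : ∀ j, US (pull φ (X' j)) (σ j) := fun j => (hexσ j).choose_spec
  have hexτ : ∀ i, ∃ j, US (pull φ.symm (X i)) j := fun i =>
    (exists_US_pull_iff d' d hd' hd φ.symm b hφ' (hX i).ne_one).mp ⟨i, hX i⟩
  set τ : Fin n → Fin m := fun i => (hexτ i).choose with hτdef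
  have hτ : ∀ i, US (pull φ.symm (X i)) (τ i) := fun i => (hexτ i).choose_spec
  -- well-definedness in both directions
  have wdF : ∀ {χ'₁ χ'₂ : AddChar (∀ k, A' k) ℂ} {j : Fin m} {i₁ i₂ : Fin n},
      US χ'₁ j → US χ'₂ j → US (pull φ χ'₁) i₁ → US (pull φ χ'₂) i₂ → i₁ = i₂ :=
    fun h1 h2 g1 g2 => support_wd d d' hd hd' φ a' hφ h1 h2 g1 g2
  have wdB : ∀ {χ₁ χ₂ : AddChar (∀ k, A k) ℂ} {i : Fin n} {j₁ j₂ : Fin m},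
      US χ₁ i → US χ₂ i → US (pull φ.symm χ₁) j₁ → US (pull φ.symm χ₂) j₂ → j₁ = j₂ :=
    fun h1 h2 g1 g2 => support_wd d' d hd' hd φ.symm b hφ' h1 h2 g1 g2
  have hpp : ∀ χ : AddChar (∀ k, A k) ℂ, pull φ (pull φ.symm χ) = χ := by
    intro χ
    have := pull_symm_pull φ.symm χ
    rwa [AddEquiv.symm_symm] at this
  have hτσ : ∀ j, τ (σ j) = j := by
    intro j
    exact wdB (hX (σ j)) (hσ j) (hτ (σ j)) (by rw [pull_symm_pull]; exact hX' j)
  have hστ : ∀ i, σ (τ i) = i := by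
    intro i
    exact wdF (hX' (τ i)) (hτ i) (hσ (τ i)) (by rw [hpp]; exact hX i)
  -- transported support of arbitrary single-support characters
  have keyF : ∀ {χ' : AddChar (∀ k, A' k) ℂ} {k' : Fin m} {i₂ : Fin n},
      US χ' k' → US (pull φ χ') i₂ → τ i₂ = k' := by
    intro χ' k' i₂ h1 h2
    exact wdB (hX i₂) h2 (hτ i₂) (by rw [pull_symm_pull]; exact h1)
  have keyB : ∀ {χ : AddChar (∀ k, A k) ℂ} {k : Fin n} {j₂ : Fin m},
      US χ k → US (pull φ.symm χ) j₂ → σ j₂ = k := by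
    intro χ k j₂ h1 h2
    exact wdF (hX' j₂) h2 (hσ j₂) (by rw [hpp]; exact h1)
  refine ⟨?_, ?_⟩
  · have e : Fin n ≃ Fin m := ⟨τ, σ, hστ, hτσ⟩
    have := Fintype.card_congr e
    simpa using this
  · intro i
    refine ⟨τ i, ?_⟩
    ext x'
    rw [AddSubgroup.mem_map]
    constructor
    · rintro ⟨a, ha, rfl⟩
      rw [mem_single_range_iff]
      intro k' hk'
      by_contra h0
      obtain ⟨ψ, hψ⟩ := AddChar.exists_apply_ne_zero.mpr h0
      have hψ1 : ψ ≠ 1 := fun hc => hψ (by rw [hc]; simp)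
      set χ' : AddChar (∀ k, A' k) ℂ := ψ.compAddMonoidHom (Pi.evalAddMonoidHom A' k') with hχ'
      have hUSχ' : US χ' k' := US_eval k' hψ1
      obtain ⟨i₂, hi₂⟩ :=
        (exists_US_pull_iff d d' hd hd' φ a' hφ hUSχ'.ne_one).mp ⟨k', hUSχ'⟩
      have hti : τ i₂ = k' := keyF hUSχ' hi₂
      have hne : i₂ ≠ i := fun hc => hk' (by rw [← hti, hc])
      obtain ⟨z, rfl⟩ := ha
      have hone : χ' (φ.toAddMonoidHom (AddMonoidHom.single A i z)) = 1 := by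
        have h2 := hi₂.2 i (Ne.symm hne)
        calc χ' (φ.toAddMonoidHom (AddMonoidHom.single A i z))
            = cmp (pull φ χ') i z := rfl
          _ = 1 := by rw [h2]; rfl
      exact hψ hone
    · intro hx'
      refine ⟨φ.symm x', ?_, φ.apply_symm_apply x'⟩
      rw [mem_single_range_iff]
      intro k hk
      by_contra h0
      obtain ⟨ψ, hψ⟩ := AddChar.exists_apply_ne_zero.mpr h0
      have hψ1 : ψ ≠ 1 := fun hc => hψ (by rw [hc]; simp)
      set χ : AddChar (∀ l, A l) ℂ := ψ.compAddMonoidHom (Pi.evalAddMonoidHom A k) with hχ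
      have hUSχ : US χ k := US_eval k hψ1
      obtain ⟨j₂, hj₂⟩ :=
        (exists_US_pull_iff d' d hd' hd φ.symm b hφ' hUSχ.ne_one).mp ⟨k, hUSχ⟩
      have hsj : σ j₂ = k := keyB hUSχ hj₂
      have hne : τ i ≠ j₂ := by
        intro hc
        apply hk
        rw [← hsj, ← hc, hστ i]
      obtain ⟨z, rfl⟩ := hx'
      have hone : χ (φ.symm (AddMonoidHom.single A' (τ i) z)) = 1 := by
        have h2 := hj₂.2 (τ i) hne
        calc χ (φ.symm (AddMonoidHom.single A' (τ i) z))
            = cmp (pull φ.symm χ) (τ i) z := rfl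
          _ = 1 := by rw [h2]; rfl
      exact hψ hone
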